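/- Let f, g_1,…,g_m ∈ ℝ[X] have integer coefficients and degrees at most d, set g_0 := 1 and S := {x ∈ ℝⁿ : g_1(x) ≥ 0,…,g_m(x) ≥ 0}, and assume S is nonempty, compact, contained in [−1,1]ⁿ, has nonempty interior, and Q(S) is archimedean. Assume f(x) > 0 for all x ∈ S. Then there exist an even integer D, a real number b > 0, and sums of squares σ_0, σ_1,…,σ_m ∈ ℝ[X] with deg(σ_j g_j) ≤ D for all j = 0,…,m, such that f = b + Σ_{j=0}^m σ_j g_j. -/

import Mathlib

open MvPolynomial

noncomputable section

/-- `f` is a sum of squares of polynomials. -/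
def IsSOS {n : ℕ} (f : MvPolynomial (Fin n) ℝ) : Prop :=
  ∃ (r : ℕ) (s : Fin r → MvPolynomial (Fin n) ℝ), f = ∑ i, (s i) ^ 2

/-- Membership in the quadratic module generated by `g_1,…,g_m` (with `g_0 := 1`). -/
def InQM {n m : ℕ} (g : Fin m → MvPolynomial (Fin n) ℝ) (f : MvPolynomial (Fin n) ℝ) : Prop :=
  ∃ σ0 : MvPolynomial (Fin n) ℝ, ∃ σ : Fin m → MvPolynomial (Fin n) ℝ,
    IsSOS σ0 ∧ (∀ j, IsSOS (σ j)) ∧ f = σ0 + ∑ j, σ j * g j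

namespace Putinar

variable {n : ℕ}

local notation "P" => MvPolynomial (Fin n) ℝ

/-! ### Sums of squares -/

theorem sos_zero : IsSOS (0 : P) := ⟨0, fun i => 0, by simp⟩

theorem sos_sq (p : P) : IsSOS (p ^ 2) := ⟨1, fun _ => p, by simp⟩

theorem sos_add {a b : P} (ha : IsSOS a) (hb : IsSOS b) : IsSOS (a + b) := by
  obtain ⟨r, s, rfl⟩ := ha
  obtain ⟨r', s', rfl⟩ := hb
  refine ⟨r + r', Fin.append s s', ?_⟩
  rw [Fin.sum_univ_add]
  simp [Fin.append_left, Fin.append_right]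

theorem sos_sum {ι : Type*} (s : Finset ι) (F : ι → P) (h : ∀ i ∈ s, IsSOS (F i)) :
    IsSOS (∑ i ∈ s, F i) :=
  Finset.sum_induction F IsSOS (fun _ _ ha hb => sos_add ha hb) sos_zero h

theorem sos_sqmul (h : P) {a : P} (ha : IsSOS a) : IsSOS (h ^ 2 * a) := by
  obtain ⟨r, s, rfl⟩ := ha
  refine ⟨r, fun i => h * s i, ?_⟩
  rw [Finset.mul_sum]
  simp [mul_pow]

theorem sos_mul {a b : P} (ha : IsSOS a) (hb : IsSOS b) : IsSOS (a * b) := by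
  obtain ⟨r, s, rfl⟩ := ha
  rw [Finset.sum_mul]
  exact sos_sum _ _ fun i _ => sos_sqmul (s i) hb

theorem sos_const {c : ℝ} (hc : 0 ≤ c) : IsSOS (C c : P) := by
  have : (C c : P) = (C (Real.sqrt c)) ^ 2 := by
    rw [← map_pow, Real.sq_sqrt hc]
  rw [this]; exact sos_sq _

theorem sos_one : IsSOS (1 : P) := by
  have h := sos_const (n := n) (c := 1) (by norm_num)
  simpa using h

theorem sos_eval_nonneg {a : P} (ha : IsSOS a) (x : Fin n → ℝ) : 0 ≤ eval x a := by
  obtain ⟨r, s, rfl⟩ := ha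
  rw [map_sum]
  exact Finset.sum_nonneg fun i _ => by rw [map_pow]; positivity

/-! ### Quadratic modules -/

structure IsQM (Q : Set P) : Prop where
  add : ∀ {a b : P}, a ∈ Q → b ∈ Q → a + b ∈ Q
  sqmul : ∀ (h : P) {a : P}, a ∈ Q → h ^ 2 * a ∈ Q
  sos : ∀ {s : P}, IsSOS s → s ∈ Q

def Arch (Q : Set P) : Prop := ∀ p : P, ∃ N : ℝ, 0 < N ∧ C N - p ∈ Q

theorem IsQM.zero {Q : Set P} (hQ : IsQM Q) : (0 : P) ∈ Q := hQ.sos sos_zero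

theorem IsQM.const {Q : Set P} (hQ : IsQM Q) {c : ℝ} (hc : 0 ≤ c) : (C c : P) ∈ Q :=
  hQ.sos (sos_const hc)

theorem IsQM.sosmul {Q : Set P} (hQ : IsQM Q) {s a : P} (hs : IsSOS s) (ha : a ∈ Q) :
    s * a ∈ Q := by
  obtain ⟨r, t, rfl⟩ := hs
  rw [Finset.sum_mul]
  exact Finset.sum_induction _ (· ∈ Q) (fun _ _ h1 h2 => hQ.add h1 h2) hQ.zero
    fun i _ => hQ.sqmul (t i) ha

theorem IsQM.cmul {Q : Set P} (hQ : IsQM Q) {c : ℝ} {a : P} (hc : 0 ≤ c) (ha : a ∈ Q) :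
    C c * a ∈ Q :=
  hQ.sosmul (sos_const hc) ha

theorem arch_mono {Q Q' : Set P} (h : Q ⊆ Q') (hA : Arch Q) : Arch Q' := by
  intro p; obtain ⟨N, hN, hmem⟩ := hA p; exact ⟨N, hN, h hmem⟩

/-! ### The quadratic module generated by the `g j` -/

variable {m : ℕ}

theorem isQM_InQM (g : Fin m → P) : IsQM {p : P | InQM g p} := by
  constructor
  · rintro a b ⟨s0, s, hs0, hs, rfl⟩ ⟨t0, t, ht0, ht, rfl⟩
    refine ⟨s0 + t0, fun j => s j + t j, sos_add hs0 ht0, fun j => sos_add (hs j) (ht j), ?_⟩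
    simp only [add_mul, Finset.sum_add_distrib]
    ring
  · rintro h a ⟨s0, s, hs0, hs, rfl⟩
    refine ⟨h ^ 2 * s0, fun j => h ^ 2 * s j, sos_sqmul h hs0, fun j => sos_sqmul h (hs j), ?_⟩
    rw [mul_add, Finset.mul_sum]
    simp only [mul_assoc]
  · intro s hs
    exact ⟨s, fun _ => 0, hs, fun _ => sos_zero, by simp⟩

theorem g_mem_InQM (g : Fin m → P) (j : Fin m) : g j ∈ {p : P | InQM g p} := by
  refine ⟨0, fun j' => if j' = j then 1 else 0, sos_zero, ?_, ?_⟩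
  · intro j'
    by_cases h : j' = j <;> simp [h, sos_one, sos_zero]
  · simp [ite_mul, Finset.sum_ite_eq']

/-! ### Archimedean property of the generated module -/

theorem arch_InQM (g : Fin m → P)
    (harch : ∃ N : ℕ, InQM g ((N : P) - ∑ i, (X i) ^ 2)) :
    Arch {p : P | InQM g p} := by
  set Q := {p : P | InQM g p} with hQdef
  have hQ : IsQM Q := isQM_InQM g
  have h2C : (C (2:ℝ) : P) = 2 := map_ofNat C 2
  have hhalf : (2 : P) * C ((1:ℝ)/2) = 1 := by
    rw [← h2C, ← map_mul]; norm_num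
  -- bound on squares of variables
  have hXB : ∀ i : Fin n, ∃ N : ℝ, 0 ≤ N ∧ C N - (X i) ^ 2 ∈ Q := by
    intro i
    obtain ⟨N, hN⟩ := harch
    refine ⟨(N : ℝ), Nat.cast_nonneg N, ?_⟩
    have hid : C ((N : ℕ) : ℝ) - (X i : P) ^ 2
        = ((N : P) - ∑ j, (X j) ^ 2) + ∑ j ∈ Finset.univ.erase i, (X j) ^ 2 := by
      rw [MvPolynomial.C_eq_coe_nat, ← Finset.add_sum_erase _ _ (Finset.mem_univ i)]
      ring
    rw [hid]
    exact hQ.add hN (hQ.sos (sos_sum _ _ fun j _ => sos_sq _))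
  -- products of bounded elements are bounded
  have hmul : ∀ (p q : P) (N1 N2 : ℝ), 0 ≤ N1 → 0 ≤ N2 → C N1 - p ^ 2 ∈ Q →
      C N2 - q ^ 2 ∈ Q → C ((N1 ^ 2 + N2 ^ 2) / 2) - (p * q) ^ 2 ∈ Q := by
    intro p q N1 N2 hN1 hN2 hp hq
    have h4 : ∀ (r : P) (N : ℝ), 0 ≤ N → C N - r ^ 2 ∈ Q → C (N ^ 2) - r ^ 4 ∈ Q := by
      intro r N hN hr
      have hid : C (N ^ 2) - r ^ 4 = C N * (C N - r ^ 2) + r ^ 2 * (C N - r ^ 2) := by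
        rw [map_pow]; ring
      rw [hid]
      exact hQ.add (hQ.cmul hN hr) (hQ.sqmul r hr)
    have hid : C ((N1 ^ 2 + N2 ^ 2) / 2) - (p * q) ^ 2
        = C (1/2) * (C (N1 ^ 2) - p ^ 4) + C (1/2) * (C (N2 ^ 2) - q ^ 4)
          + C (1/2) * (p ^ 2 - q ^ 2) ^ 2 := by
      rw [show (N1 ^ 2 + N2 ^ 2) / 2 = (N1 ^ 2 + N2 ^ 2) * (1/2) by ring, map_mul, map_add,
        map_pow, map_pow]
      linear_combination (p ^ 2 * q ^ 2 : P) * hhalf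
    rw [hid]
    exact hQ.add (hQ.add (hQ.cmul (by norm_num) (h4 p N1 hN1 hp))
      (hQ.cmul (by norm_num) (h4 q N2 hN2 hq))) (hQ.cmul (by norm_num) (hQ.sos (sos_sq _)))
  -- all squares are bounded
  have hB : ∀ p : P, ∃ N : ℝ, 0 ≤ N ∧ C N - p ^ 2 ∈ Q := by
    intro p
    induction p using MvPolynomial.induction_on with
    | C a =>
        exact ⟨a ^ 2, sq_nonneg a, by rw [← map_pow, sub_self]; exact hQ.zero⟩
    | add p q hp hq =>
        obtain ⟨N1, hN1, hp⟩ := hp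
        obtain ⟨N2, hN2, hq⟩ := hq
        refine ⟨2 * N1 + 2 * N2, by positivity, ?_⟩
        have hid : C (2 * N1 + 2 * N2) - (p + q) ^ 2
            = C 2 * (C N1 - p ^ 2) + C 2 * (C N2 - q ^ 2) + (p - q) ^ 2 := by
          rw [map_add, map_mul, map_mul, h2C]
          ring
        rw [hid]
        exact hQ.add (hQ.add (hQ.cmul (by norm_num) hp) (hQ.cmul (by norm_num) hq))
          (hQ.sos (sos_sq _))
    | mul_X p i hp =>
        obtain ⟨N1, hN1, hp⟩ := hp
        obtain ⟨N2, hN2, hXi⟩ := hXB i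
        exact ⟨(N1 ^ 2 + N2 ^ 2) / 2, by positivity, hmul p (X i) N1 N2 hN1 hN2 hp hXi⟩
  -- conclude
  intro p
  obtain ⟨N, hN0, hsq⟩ := hB p
  refine ⟨N + 1/4, by positivity, ?_⟩
  have h2 : (C ((1:ℝ)/4) : P) = C (1/2) * C (1/2) := by
    rw [← map_mul]; norm_num
  have hid : C (N + 1/4) - p = (p - C (1/2)) ^ 2 + (C N - p ^ 2) := by
    rw [map_add]
    linear_combination (p : P) * hhalf + h2
  rw [hid]
  exact hQ.add (hQ.sos (sos_sq _)) hsq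

/-! ### The descent lemma -/

theorem lemC {Q : Set P} (hQ : IsQM Q) (hA : Arch Q) {σq qq G : P}
    (hσ : IsSOS σq) (hq : qq ∈ Q) (hrel : σq * G = 1 + qq) :
    ∀ ε : ℝ, 0 < ε → G + C ε ∈ Q := by
  intro ε hε
  obtain ⟨Bs, hBs0, hBs⟩ := hA σq
  obtain ⟨Bd, hBd0, hBd⟩ := hA qq
  obtain ⟨K, hK0, hK⟩ := hA (-G)
  -- the one-step descent
  have step : ∀ lam : ℝ, lam < 0 → G - C lam ∈ Q →
      G - C (lam + (-4 * lam) / ((-lam) * Bs + Bd + 1)) ∈ Q := by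
    intro lam hlam hmem
    set B : ℝ := (-lam) * Bs + Bd + 1 with hBdef
    have hBpos : 0 < B := by
      have : 0 < (-lam) * Bs := mul_pos (by linarith) hBs0
      positivity
    set t : ℝ := B / (-2 * lam) with htdef
    have htpos : 0 < t := div_pos hBpos (by linarith)
    have hlam0 : lam ≠ 0 := ne_of_lt hlam
    have hBt : (-2) * lam * t = (-lam) * Bs + Bd + 1 := by
      rw [htdef, hBdef]
      field_simp
    have h2t : 2 / t = (-4 * lam) / B := by
      rw [htdef]
      rw [div_div_eq_mul_div]
      ring
    have ht0 : t ≠ 0 := ne_of_gt htpos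
    clear_value t B
    have h1 : (C ((-2) * lam * t) : P) = C ((-lam) * Bs + Bd + 1) := by rw [hBt]
    have key : C (t ^ 2) * G - C (t ^ 2 * lam + 2 * t)
        = (C t - σq) ^ 2 * (G - C lam) + C (2 * t) * qq
          + σq * (C (-lam) * (C Bs - σq) + (C Bd - qq)) := by
      simp only [map_add, map_mul, map_neg, map_pow, map_one, map_ofNat] at h1 ⊢
      linear_combination (2 * (C t : P) - σq) * hrel + σq * h1
    have hmem2 : C (t ^ 2) * G - C (t ^ 2 * lam + 2 * t) ∈ Q := by
      rw [key]
      refine hQ.add (hQ.add (hQ.sqmul _ hmem) (hQ.cmul (by positivity) hq))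
        (hQ.sosmul hσ (hQ.add (hQ.cmul (by linarith) hBs) hBd))
    have conv : G - C (lam + 2 / t)
        = C (1 / t ^ 2) * (C (t ^ 2) * G - C (t ^ 2 * lam + 2 * t)) := by
      rw [mul_sub, ← mul_assoc, ← map_mul, ← map_mul]
      have e1 : 1 / t ^ 2 * t ^ 2 = 1 := by field_simp
      have e2 : 1 / t ^ 2 * (t ^ 2 * lam + 2 * t) = lam + 2 / t := by
        field_simp
      rw [e1, e2, map_one, one_mul]
    rw [← h2t]
    rw [conv]
    exact hQ.cmul (by positivity) hmem2
  -- iterate the descent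
  set δ : ℝ := 4 * ε / (K * Bs + Bd + 1) with hδdef
  have hδpos : 0 < δ := by positivity
  have iter : ∀ j : ℕ, ∃ lam : ℝ, -K ≤ lam ∧ (G - C lam ∈ Q) ∧
      (-ε ≤ lam ∨ -K + j * δ ≤ lam) := by
    intro j
    induction j with
    | zero =>
        refine ⟨-K, le_refl _, ?_, Or.inr (by simp)⟩
        have : G - C (-K) = C K - -G := by rw [map_neg]; ring
        rw [this]
        exact hK
    | succ j ih =>
        obtain ⟨lam, hlamK, hmem, hdisj⟩ := ih
        by_cases hc : -ε ≤ lam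
        · exact ⟨lam, hlamK, hmem, Or.inl hc⟩
        · push_neg at hc
          have hlamneg : lam < 0 := by linarith
          set B : ℝ := (-lam) * Bs + Bd + 1 with hBdef
          have hBpos : 0 < B := by
            have : 0 < (-lam) * Bs := mul_pos (by linarith) hBs0
            positivity
          have hstep := step lam hlamneg hmem
          refine ⟨lam + (-4 * lam) / B, ?_, hstep, Or.inr ?_⟩
          · have : 0 ≤ (-4 * lam) / B :=
              div_nonneg (by linarith) (le_of_lt hBpos)
            linarith
          · have hge : δ ≤ (-4 * lam) / B := by
              rw [hδdef, div_le_div_iff₀ (by positivity) hBpos, hBdef]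
              have h1 : ε ≤ -lam := le_of_lt (by linarith)
              have h2 : -lam ≤ K := by linarith
              have hεK : ε ≤ K := h1.trans h2
              have A1 : ε * ((-lam) * Bs) ≤ K * ((-lam) * Bs) :=
                mul_le_mul_of_nonneg_right hεK
                  (mul_nonneg (by linarith) (le_of_lt hBs0))
              have A2 : ε * (Bd + 1) ≤ (-lam) * (Bd + 1) :=
                mul_le_mul_of_nonneg_right h1 (by linarith)
              nlinarith [A1, A2]
            have hright : -K + j * δ ≤ lam := by
              rcases hdisj with h | h
              · exact absurd h (not_le.mpr hc)
              · exact h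
            push_cast
            linarith
  obtain ⟨j, hj⟩ := exists_nat_ge ((K - ε) / δ)
  obtain ⟨lam, hlamK, hmem, hdisj⟩ := iter j
  have hlam : -ε ≤ lam := by
    rcases hdisj with h | h
    · exact h
    · have : K - ε ≤ j * δ := by
        rw [div_le_iff₀ hδpos] at hj
        linarith
      linarith
  have hid : G + C ε = (G - C lam) + C (lam + ε) := by
    rw [map_add]; ring
  rw [hid]
  exact hQ.add hmem (hQ.const (by linarith))

/-! ### Existence of a nonnegativity point for proper archimedean quadratic modules -/

theorem C_two' : (C (2:ℝ) : P) = 2 := map_ofNat C 2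

theorem two_C_half : (2 : P) * C ((1:ℝ)/2) = 1 := by
  rw [← C_two', ← map_mul]; norm_num

theorem exists_point {Q0 : Set P} (hQ0 : IsQM Q0) (hA : Arch Q0)
    (hproper : (-1 : P) ∉ Q0) : ∃ x : Fin n → ℝ, ∀ p ∈ Q0, 0 ≤ eval x p := by
  classical
  set 𝒮 : Set (Set P) := {Q | IsQM Q ∧ Q0 ⊆ Q ∧ (-1 : P) ∉ Q} with h𝒮
  have hzorn : ∃ Q, Q0 ⊆ Q ∧ Maximal (· ∈ 𝒮) Q := by
    apply zorn_subset_nonempty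
    · intro c hc hchain hcne
      refine ⟨⋃₀ c, ⟨?_, ?_, ?_⟩, fun s hs => Set.subset_sUnion_of_mem hs⟩
      · constructor
        · rintro a b ⟨Qa, hQa, ha⟩ ⟨Qb, hQb, hb⟩
          rcases hchain.total hQa hQb with h | h
          · exact ⟨Qb, hQb, ((hc hQb).1).add (h ha) hb⟩
          · exact ⟨Qa, hQa, ((hc hQa).1).add ha (h hb)⟩
        · rintro h a ⟨Qa, hQa, ha⟩
          exact ⟨Qa, hQa, ((hc hQa).1).sqmul h ha⟩
        · intro s hs
          obtain ⟨Qa, hQa⟩ := hcne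
          exact ⟨Qa, hQa, ((hc hQa).1).sos hs⟩
      · obtain ⟨Qa, hQa⟩ := hcne
        exact ((hc hQa).2.1).trans (Set.subset_sUnion_of_mem hQa)
      · rintro ⟨Qa, hQa, ha⟩
        exact (hc hQa).2.2 ha
    · exact ⟨hQ0, subset_rfl, hproper⟩
  obtain ⟨Q, hQ0Q, hmax⟩ := hzorn
  have hQM : IsQM Q := hmax.1.1
  have hprop : (-1 : P) ∉ Q := hmax.1.2.2
  have hAQ : Arch Q := arch_mono hQ0Q hA
  -- no negative constants
  have hneg : ∀ c : ℝ, 0 < c → C (-c) ∉ Q := by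
    intro c hc hmem
    refine hprop ?_
    have hid : (-1 : P) = (C (Real.sqrt (1/c))) ^ 2 * C (-c) := by
      rw [← map_pow, Real.sq_sqrt (by positivity), ← map_mul]
      rw [show (1/c) * (-c) = -1 by field_simp]
      rw [map_neg, map_one]
    rw [hid]
    exact hQM.sqmul _ hmem
  -- maximality: elements outside Q give a representation of -1
  have hext : ∀ a : P, a ∉ Q → ∃ q ∈ Q, ∃ s, IsSOS s ∧ q + s * a = -1 := by
    intro a ha
    set Q' : Set P := {p | ∃ q ∈ Q, ∃ s, IsSOS s ∧ p = q + s * a} with hQ'def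
    have hQ'QM : IsQM Q' := by
      constructor
      · rintro p1 p2 ⟨q1, hq1, s1, hs1, rfl⟩ ⟨q2, hq2, s2, hs2, rfl⟩
        exact ⟨q1 + q2, hQM.add hq1 hq2, s1 + s2, sos_add hs1 hs2, by ring⟩
      · rintro h p ⟨q, hq, s, hs, rfl⟩
        exact ⟨h ^ 2 * q, hQM.sqmul h hq, h ^ 2 * s, sos_sqmul h hs, by ring⟩
      · intro s hs
        exact ⟨s, hQM.sos hs, 0, sos_zero, by ring⟩
    have hsub : Q ⊆ Q' := fun q hq => ⟨q, hq, 0, sos_zero, by ring⟩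
    have haQ' : a ∈ Q' := ⟨0, hQM.zero, 1, sos_one, by ring⟩
    by_cases h1 : (-1 : P) ∈ Q'
    · obtain ⟨q, hq, s, hs, he⟩ := h1
      exact ⟨q, hq, s, hs, he.symm⟩
    · exfalso
      have hmem𝒮 : Q' ∈ 𝒮 := ⟨hQ'QM, hQ0Q.trans hsub, h1⟩
      exact ha (hmax.2 hmem𝒮 hsub haQ')
  -- totality
  have htot : ∀ a : P, a ∈ Q ∨ -a ∈ Q := by
    intro a
    by_contra hcon
    push_neg at hcon
    obtain ⟨q1, hq1, s1, hs1, he1⟩ := hext a hcon.1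
    obtain ⟨q2, hq2, s2, hs2, he2⟩ := hext (-a) hcon.2
    have hkey : -(s1 + s2) = s2 * q1 + s1 * q2 := by
      linear_combination (-s2) * he1 + (-s1) * he2
    have hmemss : -(s1 + s2) ∈ Q := by
      rw [hkey]
      exact hQM.add (hQM.sosmul hs2 hq1) (hQM.sosmul hs1 hq2)
    have hs2neg : -s2 ∈ Q := by
      have hid : -s2 = -(s1 + s2) + s1 := by ring
      rw [hid]
      exact hQM.add hmemss (hQM.sos hs1)
    have he2' : s2 * a = 1 + q2 := by linear_combination -he2
    have hsq : -((1 + q2) ^ 2) ∈ Q := by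
      have hid : -((1 + q2) ^ 2) = (a ^ 2 * s2) * (-s2) := by
        linear_combination (s2 * a + 1 + q2) * he2'
      rw [hid]
      exact hQM.sosmul (sos_mul (sos_sq a) hs2) hs2neg
    refine hprop ?_
    have hid : (-1 : P) = -((1 + q2) ^ 2) + (C 2 * q2 + q2 ^ 2) := by
      rw [C_two']
      ring
    rw [hid]
    exact hQM.add hsq (hQM.add (hQM.cmul (by norm_num) hq2) (hQM.sos (sos_sq q2)))
  -- closedness under small constant perturbations
  have hclosed : ∀ p : P, (∀ δ : ℝ, 0 < δ → p + C δ ∈ Q) → p ∈ Q := by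
    intro p hp
    set Q' : Set P := {h : P | ∀ δ : ℝ, 0 < δ → h + C δ ∈ Q} with hQ'def
    have hQ'QM : IsQM Q' := by
      constructor
      · intro a b ha hb δ hδ
        have hid : a + b + C δ = (a + C (δ/2)) + (b + C (δ/2)) := by
          rw [show δ = δ/2 + δ/2 by ring, map_add]
          ring
        rw [hid]
        exact hQM.add (ha _ (by linarith)) (hb _ (by linarith))
      · intro h a ha δ hδ
        obtain ⟨N, hN, hb⟩ := hAQ (h ^ 2)
        have e : C (δ/N) * C N = (C δ : P) := by
          rw [← map_mul]
          congr 1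
          field_simp
        have hid : h ^ 2 * a + C δ = h ^ 2 * (a + C (δ/N)) + C (δ/N) * (C N - h ^ 2) := by
          linear_combination -e
        rw [hid]
        exact hQM.add (hQM.sqmul h (ha _ (by positivity))) (hQM.cmul (by positivity) hb)
      · intro s hs δ hδ
        exact hQM.add (hQM.sos hs) (hQM.const (le_of_lt hδ))
    have hsub : Q ⊆ Q' := fun q hq δ hδ => hQM.add hq (hQM.const (le_of_lt hδ))
    have h1 : (-1 : P) ∉ Q' := by
      intro hmem
      have h2 := hmem (1/2) (by norm_num)
      have hid : (C (-(1/2)) : P) = (-1 : P) + C (1/2) := by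
        rw [show (-(1/2) : ℝ) = -1 + 1/2 by norm_num, map_add, map_neg, map_one]
      rw [← hid] at h2
      exact hneg (1/2) (by norm_num) h2
    have hmem𝒮 : Q' ∈ 𝒮 := ⟨hQ'QM, hQ0Q.trans hsub, h1⟩
    exact hmax.2 hmem𝒮 hsub hp
  -- the functional
  set α : P → ℝ := fun p => sInf {lam : ℝ | C lam - p ∈ Q} with hα
  have hsetne : ∀ p : P, ({lam : ℝ | C lam - p ∈ Q}).Nonempty := by
    intro p
    obtain ⟨N, _, hmem⟩ := hAQ p
    exact ⟨N, hmem⟩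
  have hbdd : ∀ p : P, BddBelow {lam : ℝ | C lam - p ∈ Q} := by
    intro p
    obtain ⟨N', _, hmem'⟩ := hAQ (-p)
    refine ⟨-N', fun lam hlam => ?_⟩
    by_contra hlt
    push_neg at hlt
    have hsum : (C (lam + N') : P) ∈ Q := by
      have hid : (C (lam + N') : P) = (C lam - p) + (C N' - -p) := by
        rw [map_add]
        ring
      rw [hid]
      exact hQM.add hlam hmem'
    have : C (lam + N') = (C (-(-(lam + N'))) : P) := by rw [neg_neg]
    rw [this] at hsum
    exact hneg (-(lam + N')) (by linarith) hsum
  have hαdef : ∀ p : P, α p = sInf {lam : ℝ | C lam - p ∈ Q} := fun p => rfl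
  have hup : ∀ p : P, C (α p) - p ∈ Q := by
    intro p
    apply hclosed
    intro δ hδ
    have hlt : sInf {lam : ℝ | C lam - p ∈ Q} < α p + δ := by
      rw [← hαdef p]
      linarith
    obtain ⟨lam, hlam, hlt'⟩ := exists_lt_of_csInf_lt (hsetne p) hlt
    have hid : C (α p) - p + C δ = (C lam - p) + C (α p + δ - lam) := by
      rw [map_sub, map_add]
      ring
    rw [hid]
    exact hQM.add hlam (hQM.const (by linarith))
  have hdown : ∀ p : P, p - C (α p) ∈ Q := by
    intro p
    apply hclosed
    intro δ hδ
    have hnotin : C (α p - δ) - p ∉ Q := by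
      intro hmem
      have hle : α p ≤ α p - δ := by
        rw [hαdef p]
        exact csInf_le (hbdd p) hmem
      linarith
    have hmem' : -(C (α p - δ) - p) ∈ Q := (htot (C (α p - δ) - p)).resolve_left hnotin
    have hid : p - C (α p) + C δ = -(C (α p - δ) - p) := by
      rw [map_sub]
      ring
    rw [hid]
    exact hmem'
  -- the support ideal
  set Isupp : Set P := {h | h ∈ Q ∧ -h ∈ Q} with hIdef
  have hIadd : ∀ {a b : P}, a ∈ Isupp → b ∈ Isupp → a + b ∈ Isupp := by
    rintro a b ⟨ha1, ha2⟩ ⟨hb1, hb2⟩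
    exact ⟨hQM.add ha1 hb1, by rw [neg_add]; exact hQM.add ha2 hb2⟩
  have hImul : ∀ (a h : P), h ∈ Isupp → a * h ∈ Isupp := by
    have key : ∀ (a h : P), h ∈ Isupp → a * h ∈ Q := by
      rintro a h ⟨h1, h2⟩
      have hid : a * h = C (1/2) * ((a + 1) ^ 2 * h + (a ^ 2 * (-h) + -h)) := by
        have hh := two_C_half (n := n)
        linear_combination (-(a * h)) * hh
      rw [hid]
      refine hQM.cmul (by norm_num) (hQM.add (hQM.sqmul _ h1) (hQM.add (hQM.sqmul _ h2) h2))
    rintro a h hh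
    refine ⟨key a h hh, ?_⟩
    have hid : -(a * h) = a * (-h) := by ring
    rw [hid]
    exact key a (-h) ⟨hh.2, by rw [neg_neg]; exact hh.1⟩
  have hαI : ∀ p : P, p - C (α p) ∈ Isupp := by
    intro p
    exact ⟨hdown p, by rw [neg_sub]; exact hup p⟩
  -- the point
  set x : Fin n → ℝ := fun i => α (X i) with hx
  have hkeyI : ∀ p : P, p - C (eval x p) ∈ Isupp := by
    intro p
    induction p using MvPolynomial.induction_on with
    | C a =>
        rw [eval_C, sub_self]
        exact ⟨hQM.zero, by rw [neg_zero]; exact hQM.zero⟩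
    | add p q hp hq =>
        have hid : p + q - C (eval x (p + q)) = (p - C (eval x p)) + (q - C (eval x q)) := by
          rw [map_add, map_add]
          ring
        rw [hid]
        exact hIadd hp hq
    | mul_X p i hp =>
        have hXi : X i - C (x i) ∈ Isupp := by
          have := hαI (X i : P)
          simpa using this
        have hid : p * X i - C (eval x (p * X i))
            = p * (X i - C (x i)) + C (x i) * (p - C (eval x p)) := by
          rw [map_mul, eval_X, map_mul]
          ring
        rw [hid]
        exact hIadd (hImul p _ hXi) (hImul (C (x i)) _ hp)
  refine ⟨x, fun p hp => ?_⟩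
  by_contra hlt
  push_neg at hlt
  have hCe : (C (eval x p) : P) ∈ Q := by
    have hid : (C (eval x p) : P) = p + -(p - C (eval x p)) := by ring
    rw [hid]
    exact hQM.add (hQ0Q hp) (hkeyI p).2
  have : (C (-(- eval x p)) : P) ∈ Q := by rw [neg_neg]; exact hCe
  exact hneg (- eval x p) (by linarith) this

end Putinar

theorem stmt_14 {n m : ℕ} (hn : 1 ≤ n) (d : ℕ)
    (f : MvPolynomial (Fin n) ℝ) (g : Fin m → MvPolynomial (Fin n) ℝ)
    (hfint : ∀ σ, ∃ z : ℤ, f.coeff σ = (z : ℝ))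
    (hgint : ∀ j, ∀ σ, ∃ z : ℤ, (g j).coeff σ = (z : ℝ))
    (hfdeg : f.totalDegree ≤ d) (hgdeg : ∀ j, (g j).totalDegree ≤ d)
    (S : Set (Fin n → ℝ)) (hS : S = {x | ∀ j, 0 ≤ eval x (g j)})
    (hSne : S.Nonempty) (hScpt : IsCompact S)
    (hScube : S ⊆ Set.Icc (-1 : Fin n → ℝ) 1)
    (hSint : (interior S).Nonempty)
    (harch : ∃ N : ℕ, InQM g ((N : MvPolynomial (Fin n) ℝ) - ∑ i, (X i) ^ 2))
    (hfpos : ∀ x ∈ S, 0 < eval x f) :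
    ∃ D : ℕ, Even D ∧ ∃ b : ℝ, 0 < b ∧
      ∃ σ0 : MvPolynomial (Fin n) ℝ, ∃ σ : Fin m → MvPolynomial (Fin n) ℝ,
        IsSOS σ0 ∧ σ0.totalDegree ≤ D ∧
        (∀ j, IsSOS (σ j) ∧ (σ j * g j).totalDegree ≤ D) ∧
        f = C b + σ0 + ∑ j, σ j * g j := by
  classical
  set M : Set (MvPolynomial (Fin n) ℝ) := {p | InQM g p} with hM
  have hQM : Putinar.IsQM M := Putinar.isQM_InQM g
  have hAM : Putinar.Arch M := Putinar.arch_InQM g harch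
  obtain ⟨x0, hx0S, hx0min⟩ :=
    hScpt.exists_isMinOn hSne (MvPolynomial.continuous_eval f).continuousOn
  set μ : ℝ := eval x0 f with hμ
  have hμpos : 0 < μ := hfpos x0 hx0S
  set G : MvPolynomial (Fin n) ℝ := f - C (μ/2) with hG
  set M2 : Set (MvPolynomial (Fin n) ℝ) :=
    {p | ∃ q ∈ M, ∃ s, IsSOS s ∧ p = q + s * (-G)} with hM2
  have main : ∃ b : ℝ, 0 < b ∧ (f - C b) ∈ M := by
    by_cases hcase : (-1 : MvPolynomial (Fin n) ℝ) ∈ M2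
    · obtain ⟨q, hq, s, hs, he⟩ := hcase
      have hrel : s * G = 1 + q := by linear_combination he
      have hres := Putinar.lemC hQM hAM hs hq hrel (μ/4) (by positivity)
      refine ⟨μ/4, by positivity, ?_⟩
      have hid : f - C (μ/4) = G + C (μ/4) := by
        rw [hG, show (μ/2 : ℝ) = μ/4 + μ/4 by ring, map_add]
        ring
      rw [hid]
      exact hres
    · exfalso
      have hQM2 : Putinar.IsQM M2 := by
        constructor
        · rintro p1 p2 ⟨q1, hq1, s1, hs1, rfl⟩ ⟨q2, hq2, s2, hs2, rfl⟩
          exact ⟨q1 + q2, hQM.add hq1 hq2, s1 + s2, Putinar.sos_add hs1 hs2, by ring⟩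
        · rintro h p ⟨q, hq, s, hs, rfl⟩
          exact ⟨h ^ 2 * q, hQM.sqmul h hq, h ^ 2 * s, Putinar.sos_sqmul h hs, by ring⟩
        · intro s hs
          exact ⟨s, hQM.sos hs, 0, Putinar.sos_zero, by ring⟩
      have hsub : M ⊆ M2 := fun q hq => ⟨q, hq, 0, Putinar.sos_zero, by ring⟩
      have hGneg : -G ∈ M2 := ⟨0, hQM.zero, 1, Putinar.sos_one, by ring⟩
      obtain ⟨x, hx⟩ := Putinar.exists_point hQM2 (Putinar.arch_mono hsub hAM) hcase
      have hxS : x ∈ S := by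
        rw [hS]
        intro j
        exact hx _ (hsub (Putinar.g_mem_InQM g j))
      have h1 : 0 ≤ eval x (-G) := hx _ hGneg
      have h2 : eval x G = eval x f - μ/2 := by
        rw [hG, map_sub, eval_C]
      have h3 : μ ≤ eval x f := isMinOn_iff.mp hx0min x hxS
      rw [map_neg] at h1
      linarith
  obtain ⟨b, hb, hmem⟩ := main
  obtain ⟨σ0, σ, hσ0, hσ, heq⟩ := hmem
  set D : ℕ := 2 * max σ0.totalDegree (Finset.univ.sup fun j => (σ j * g j).totalDegree)
    with hD
  refine ⟨D, even_two_mul _, b, hb, σ0, σ, hσ0, ?_, ?_, ?_⟩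
  · have h1 : σ0.totalDegree ≤ max σ0.totalDegree
        (Finset.univ.sup fun j => (σ j * g j).totalDegree) := le_max_left _ _
    omega
  · intro j
    refine ⟨hσ j, ?_⟩
    have h1 : (σ j * g j).totalDegree ≤
        Finset.univ.sup fun j => (σ j * g j).totalDegree :=
      Finset.le_sup (f := fun j => (σ j * g j).totalDegree) (Finset.mem_univ j)
    have h2 : (Finset.univ.sup fun j => (σ j * g j).totalDegree) ≤ max σ0.totalDegree
        (Finset.univ.sup fun j => (σ j * g j).totalDegree) := le_max_right _ _
    omega
  · linear_combination heq
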